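/- The Weyl algebra A₁ is rigid: its second Hochschild cohomology with coefficients in itself vanishes, HH²(A₁, A₁) = 0. Concretely, every bilinear map φ : A₁ × A₁ → A₁ satisfying a·φ(b,c) − φ(ab, c) + φ(a, bc) − φ(a,b)·c = 0 for all a,b,c is of the form φ(a,b) = a·ψ(b) − ψ(ab) + ψ(a)·b for some linear map ψ : A₁ → A₁. -/

import Mathlib

/- STATEMENT 3: The Weyl algebra A₁ is rigid: HH²(A₁,A₁) = 0.  Every bilinear
Hochschild 2-cocycle φ is a coboundary φ = ∂ψ. -/

/-- The first Weyl algebra: the free algebra on generators `q` (encoded `true`)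
and `p` (encoded `false`) modulo the relation `q*p = p*q + 1`. -/
inductive WeylRel (k : Type*) [CommRing k] :
    FreeAlgebra k Bool → FreeAlgebra k Bool → Prop
  | qp : WeylRel k (FreeAlgebra.ι k true * FreeAlgebra.ι k false)
      (FreeAlgebra.ι k false * FreeAlgebra.ι k true + 1)

/-- The first Weyl algebra `A₁` over `k`. -/
abbrev Weyl (k : Type*) [CommRing k] := RingQuot (WeylRel k)

/-- the generator `q` of the Weyl algebra -/
noncomputable def Wq (k : Type*) [CommRing k] : Weyl k :=
  RingQuot.mkRingHom (WeylRel k) (FreeAlgebra.ι k true)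

/-- the generator `p` of the Weyl algebra -/
noncomputable def Wp (k : Type*) [CommRing k] : Weyl k :=
  RingQuot.mkRingHom (WeylRel k) (FreeAlgebra.ι k false)

namespace WeylHH2

variable {k : Type*} [Field k]

/-- The basic commutation relation `q*p = p*q + 1` in the Weyl algebra. -/
lemma qp_rel : Wq k * Wp k = Wp k * Wq k + 1 := by
  have h := RingQuot.mkRingHom_rel (WeylRel.qp (k := k))
  simpa [map_mul, map_add, map_one, Wq, Wp] using h

/-- `q * p^(n+1) = p^(n+1) * q + (n+1) • p^n`. -/
lemma q_pow_p (n : ℕ) :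
    Wq k * (Wp k) ^ (n + 1) = (Wp k) ^ (n + 1) * Wq k + ((n : k) + 1) • (Wp k) ^ n := by
  induction n with
  | zero =>
    simpa using qp_rel (k := k)
  | succ m ih =>
    have : Wq k * (Wp k) ^ (m + 2) = (Wq k * (Wp k) ^ (m + 1)) * Wp k := by
      rw [mul_assoc, ← pow_succ]
    rw [this, ih, add_mul, smul_mul_assoc, mul_assoc, qp_rel, mul_add, mul_one,
      ← mul_assoc, ← pow_succ, ← pow_succ]
    module

/-- The span of the normally ordered monomials `p^i * q^j`. -/
noncomputable def M (k : Type*) [Field k] : Submodule k (Weyl k) :=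
  Submodule.span k {x | ∃ i j : ℕ, x = (Wp k) ^ i * (Wq k) ^ j}

lemma mem_M (i j : ℕ) : (Wp k) ^ i * (Wq k) ^ j ∈ M k :=
  Submodule.subset_span ⟨i, j, rfl⟩

lemma p_mul_mem {x : Weyl k} (hx : x ∈ M k) : Wp k * x ∈ M k := by
  refine Submodule.span_induction ?_ ?_ ?_ ?_ hx
  · rintro x ⟨i, j, rfl⟩
    rw [← mul_assoc, ← pow_succ']
    exact mem_M _ _
  · simpa using (M k).zero_mem
  · intro a b _ _ ha hb; rw [mul_add]; exact (M k).add_mem ha hb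
  · intro c a _ ha; rw [mul_smul_comm]; exact (M k).smul_mem c ha

lemma q_mul_mem {x : Weyl k} (hx : x ∈ M k) : Wq k * x ∈ M k := by
  refine Submodule.span_induction ?_ ?_ ?_ ?_ hx
  · rintro x ⟨i, j, rfl⟩
    cases i with
    | zero =>
      simpa [← pow_succ'] using mem_M (k := k) 0 (j + 1)
    | succ m =>
      rw [← mul_assoc, q_pow_p, add_mul, smul_mul_assoc, mul_assoc, ← pow_succ']
      exact (M k).add_mem (mem_M _ _) ((M k).smul_mem _ (mem_M _ _))
  · simpa using (M k).zero_mem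
  · intro a b _ _ ha hb; rw [mul_add]; exact (M k).add_mem ha hb
  · intro c a _ ha; rw [mul_smul_comm]; exact (M k).smul_mem c ha

lemma M_eq_top : M k = ⊤ := by
  rw [eq_top_iff]
  intro x _
  obtain ⟨y, rfl⟩ := RingQuot.mkAlgHom_surjective k (WeylRel k) x
  have key : ∀ y : FreeAlgebra k Bool, ∀ m ∈ M k,
      RingQuot.mkAlgHom k (WeylRel k) y * m ∈ M k := by
    intro y
    induction y using FreeAlgebra.induction with
    | grade0 r =>
      intro m hm
      rw [AlgHom.commutes, Algebra.algebraMap_eq_smul_one, smul_mul_assoc, one_mul]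
      exact (M k).smul_mem r hm
    | grade1 b =>
      intro m hm
      have hco : (RingQuot.mkAlgHom k (WeylRel k)) (FreeAlgebra.ι k b)
          = RingQuot.mkRingHom (WeylRel k) (FreeAlgebra.ι k b) := by
        rw [← RingQuot.mkAlgHom_coe k (WeylRel k)]; rfl
      cases b
      · rw [hco]; exact p_mul_mem hm
      · rw [hco]; exact q_mul_mem hm
    | mul a b ha hb =>
      intro m hm
      rw [map_mul, mul_assoc]
      exact ha _ (hb _ hm)
    | add a b ha hb =>
      intro m hm
      rw [map_add, add_mul]
      exact (M k).add_mem (ha _ hm) (hb _ hm)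
  have h1 : (1 : Weyl k) ∈ M k := by simpa using mem_M (k := k) 0 0
  simpa using key y 1 h1

/-- In characteristic zero, `ad q` is surjective on the Weyl algebra. -/
lemma adq_surjective [CharZero k] (x : Weyl k) :
    ∃ b : Weyl k, Wq k * b - b * Wq k = x := by
  let T : Weyl k →ₗ[k] Weyl k :=
    LinearMap.mulLeft k (Wq k) - LinearMap.mulRight k (Wq k)
  suffices h : x ∈ LinearMap.range T by
    obtain ⟨b, hb⟩ := h
    exact ⟨b, hb⟩
  have hx : x ∈ M k := by rw [M_eq_top]; trivial
  revert hx
  refine fun hx => Submodule.span_le.2 ?_ hx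
  rintro y ⟨i, j, rfl⟩
  refine ⟨((i : k) + 1)⁻¹ • ((Wp k) ^ (i + 1) * (Wq k) ^ j), ?_⟩
  have hne : ((i : k) + 1) ≠ 0 := by
    exact_mod_cast (Nat.cast_add_one_ne_zero i : ((i : k) + 1) ≠ 0)
  have hT : T ((Wp k) ^ (i + 1) * (Wq k) ^ j) = ((i : k) + 1) • ((Wp k) ^ i * (Wq k) ^ j) := by
    simp only [T, LinearMap.sub_apply, LinearMap.mulLeft_apply, LinearMap.mulRight_apply]
    rw [← mul_assoc, q_pow_p, add_mul, smul_mul_assoc, mul_assoc, mul_assoc, ← pow_succ',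
      ← pow_succ]
    abel
  rw [map_smul, hT, smul_smul, inv_mul_cancel₀ hne, one_smul]

/-- A bundled Hochschild 2-cocycle on the Weyl algebra. -/
structure Coc (k : Type*) [Field k] where
  φ : Weyl k →ₗ[k] Weyl k →ₗ[k] Weyl k
  hc : ∀ a b c : Weyl k, a * φ b c - φ (a * b) c + φ a (b * c) - φ a b * c = 0

variable (c : Coc k)

lemma Coc.one_left (b : Weyl k) : c.φ 1 b = c.φ 1 1 * b := by
  have h := c.hc 1 1 b
  simp only [one_mul] at h
  rw [← sub_eq_zero, ← h]
  abel

lemma Coc.one_right (a : Weyl k) : c.φ a 1 = a * c.φ 1 1 := by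
  have h := c.hc a 1 1
  simp only [one_mul, mul_one] at h
  rw [eq_comm, ← sub_eq_zero, ← h]
  abel

/-- The square-zero extension of the Weyl algebra twisted by the cocycle `c.φ`. -/
def Dc (_c : Coc k) : Type _ := Weyl k × Weyl k

instance : AddCommGroup (Dc c) := inferInstanceAs (AddCommGroup (Weyl k × Weyl k))
instance : Module k (Dc c) := inferInstanceAs (Module k (Weyl k × Weyl k))

instance : Ring (Dc c) :=
  { (inferInstance : AddCommGroup (Dc c)) with
    mul := fun x y => (x.1 * y.1, x.1 * y.2 + x.2 * y.1 + c.φ x.1 y.1)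
    one := ((1 : Weyl k), -c.φ 1 1)
    mul_assoc := by
      rintro ⟨a, x⟩ ⟨b, y⟩ ⟨d, z⟩
      refine Prod.ext (mul_assoc a b d) ?_
      show (a * b) * z + (a * y + x * b + c.φ a b) * d + c.φ (a * b) d
          = a * (b * z + y * d + c.φ b d) + x * (b * d) + c.φ a (b * d)
      have h := c.hc a b d
      have hneg : -(a * c.φ b d - c.φ (a * b) d + c.φ a (b * d) - c.φ a b * d) = 0 := by
        rw [h, neg_zero]
      simp only [mul_add, add_mul, mul_assoc]
      rw [← sub_eq_zero, ← hneg]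
      abel
    one_mul := by
      rintro ⟨b, y⟩
      refine Prod.ext (one_mul b) ?_
      show 1 * y + (-c.φ 1 1) * b + c.φ 1 b = y
      rw [c.one_left b, one_mul, neg_mul (c.φ 1 1) b]; abel
    mul_one := by
      rintro ⟨b, y⟩
      refine Prod.ext (mul_one b) ?_
      show b * (-c.φ 1 1) + y * 1 + c.φ b 1 = y
      rw [c.one_right b, mul_one, mul_neg b (c.φ 1 1)]; abel
    left_distrib := by
      rintro ⟨a, x⟩ ⟨b, y⟩ ⟨d, z⟩
      refine Prod.ext (mul_add a b d) ?_
      show a * (y + z) + x * (b + d) + c.φ a (b + d)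
          = (a * y + x * b + c.φ a b) + (a * z + x * d + c.φ a d)
      simp only [map_add, mul_add, add_mul]; abel
    right_distrib := by
      rintro ⟨a, x⟩ ⟨b, y⟩ ⟨d, z⟩
      refine Prod.ext (add_mul a b d) ?_
      show (a + b) * z + (x + y) * d + c.φ (a + b) d
          = (a * z + x * d + c.φ a d) + (b * z + y * d + c.φ b d)
      simp only [map_add, LinearMap.add_apply, mul_add, add_mul]; abel
    zero_mul := by
      rintro ⟨a, x⟩
      refine Prod.ext (zero_mul a) ?_
      show 0 * x + 0 * a + c.φ 0 a = 0
      simp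
    mul_zero := by
      rintro ⟨a, x⟩
      refine Prod.ext (mul_zero a) ?_
      show a * 0 + x * 0 + c.φ a 0 = 0
      simp }

lemma Dc.mul_def (x y : Dc c) :
    x * y = (x.1 * y.1, x.1 * y.2 + x.2 * y.1 + c.φ x.1 y.1) := rfl

lemma Dc.one_def : (1 : Dc c) = ((1 : Weyl k), -c.φ 1 1) := rfl

noncomputable instance : Algebra k (Dc c) :=
  Algebra.ofModule
    (fun r x y => by
      refine Prod.ext ?_ ?_
      · show (r • x.1) * y.1 = r • (x.1 * y.1); rw [smul_mul_assoc]
      · show (r • x.1) * y.2 + (r • x.2) * y.1 + c.φ (r • x.1) y.1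
            = r • (x.1 * y.2 + x.2 * y.1 + c.φ x.1 y.1)
        rw [map_smul, LinearMap.smul_apply, smul_mul_assoc, smul_mul_assoc, smul_add, smul_add])
    (fun r x y => by
      refine Prod.ext ?_ ?_
      · show x.1 * (r • y.1) = r • (x.1 * y.1); rw [mul_smul_comm]
      · show x.1 * (r • y.2) + x.2 * (r • y.1) + c.φ x.1 (r • y.1)
            = r • (x.1 * y.2 + x.2 * y.1 + c.φ x.1 y.1)
        rw [map_smul, mul_smul_comm, mul_smul_comm, smul_add, smul_add])

/-- The first projection is an algebra map `Dc c →ₐ[k] Weyl k`. -/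
noncomputable def fstHom : Dc c →ₐ[k] Weyl k where
  toFun := fun x => x.1
  map_one' := rfl
  map_mul' := fun _ _ => rfl
  map_zero' := rfl
  map_add' := fun _ _ => rfl
  commutes' := fun r => by
    show (algebraMap k (Dc c) r).1 = algebraMap k (Weyl k) r
    rw [Algebra.algebraMap_eq_smul_one, Algebra.algebraMap_eq_smul_one]
    rfl

end WeylHH2

theorem weyl_HH2_trivial (k : Type*) [Field k] [CharZero k]
    (φ : Weyl k →ₗ[k] Weyl k →ₗ[k] Weyl k)
    (hcocycle : ∀ a b c : Weyl k,
      a * φ b c - φ (a * b) c + φ a (b * c) - φ a b * c = 0) :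
    ∃ ψ : Weyl k →ₗ[k] Weyl k,
      ∀ a b : Weyl k, φ a b = a * ψ b - ψ (a * b) + ψ a * b := by
  open WeylHH2 in
  set c : Coc k := ⟨φ, hcocycle⟩ with hcdef
  -- choose u with [q, u] = φ p q - φ q p - φ 1 1
  obtain ⟨u, hu⟩ := adq_surjective (k := k) (φ (Wp k) (Wq k) - φ (Wq k) (Wp k) - φ 1 1)
  -- deformed generators in Dc c
  let Qd : Dc c := (Wq k, 0)
  let Pd : Dc c := (Wp k, u)
  have key_rel : Qd * Pd = Pd * Qd + (1 : Dc c) := by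
    rw [Dc.mul_def, Dc.mul_def, Dc.one_def]
    refine Prod.ext ?_ ?_
    · show Wq k * Wp k = Wp k * Wq k + 1
      exact qp_rel
    · show Wq k * u + 0 * Wp k + φ (Wq k) (Wp k)
        = (Wp k * 0 + u * Wq k + φ (Wp k) (Wq k)) + -(φ 1 1)
      have h2 : Wq k * u = u * Wq k
          + (φ (Wp k) (Wq k) - φ (Wq k) (Wp k) - φ 1 1) := by
        rw [eq_comm, ← sub_eq_zero, ← hu]; abel
      rw [h2, zero_mul, mul_zero]
      abel
  -- the algebra map from the Weyl algebra to Dc c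
  let f0 : FreeAlgebra k Bool →ₐ[k] Dc c :=
    FreeAlgebra.lift k (fun b => if b then Qd else Pd)
  have hrel : ∀ ⦃x y : FreeAlgebra k Bool⦄, WeylRel k x y → f0 x = f0 y := by
    rintro x y ⟨⟩
    simp only [f0, map_mul, map_add, map_one, FreeAlgebra.lift_ι_apply, if_true, if_false]
    exact key_rel
  let F : Weyl k →ₐ[k] Dc c := RingQuot.liftAlgHom k ⟨f0, hrel⟩
  -- first component of F is the identity
  have hfst : ∀ a : Weyl k, (F a).1 = a := by
    have : (fstHom c).comp F = AlgHom.id k (Weyl k) := by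
      apply RingQuot.ringQuot_ext'
      apply FreeAlgebra.hom_ext
      funext b
      simp only [Function.comp_apply, AlgHom.coe_comp, AlgHom.coe_id, id_eq]
      rw [RingQuot.liftAlgHom_mkAlgHom_apply]
      have hco : (RingQuot.mkAlgHom k (WeylRel k)) (FreeAlgebra.ι k b)
          = RingQuot.mkRingHom (WeylRel k) (FreeAlgebra.ι k b) := by
        rw [← RingQuot.mkAlgHom_coe k (WeylRel k)]; rfl
      cases b <;>
        simp only [f0, FreeAlgebra.lift_ι_apply, if_true, if_false] <;>
        rw [hco] <;> rfl
    intro a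
    exact AlgHom.congr_fun this a
  -- define ψ as minus the second component of F
  let g : Weyl k →ₗ[k] Weyl k :=
    (LinearMap.snd k (Weyl k) (Weyl k)).comp F.toLinearMap
  refine ⟨-g, fun a b => ?_⟩
  have hmul := congrArg Prod.snd (map_mul F a b)
  rw [Dc.mul_def] at hmul
  have h2 : (F (a * b)).2 = a * (F b).2 + (F a).2 * b + φ a b := by
    rw [hmul]; rw [hfst a, hfst b]
  have hg : ∀ x, g x = (F x).2 := fun _ => rfl
  simp only [LinearMap.neg_apply, hg]
  rw [mul_neg a (F b).2, neg_mul (F a).2 b, sub_neg_eq_add, h2]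
  abel
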